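/- Let C = C_{b,D} be an integer Cantor set with increasing enumeration (k_n) and δ = |D|, and let s_b denote the base-b digit sum. Then for every i ≥ 0, n ≥ 0, and 0 ≤ j < δ^i, one has s_b(k_{δ^i n + j}) = s_b(k_n) + s_b(k_j). -/

import Mathlib

namespace CantorAux

variable (b δ : ℕ) (a : ℕ → ℕ)

/-- Map `m` to the number whose base-`b` digits are the images under `a`
of the base-`δ` digits of `m`. -/
def f (m : ℕ) : ℕ := Nat.ofDigits b ((Nat.digits δ m).map a)

variable {b δ a}

lemma f_zero : f b δ a 0 = 0 := by simp [f]

lemma f_eq (h2 : 2 ≤ δ) (ha0 : a 0 = 0) (m : ℕ) :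
    f b δ a m = a (m % δ) + b * f b δ a (m / δ) := by
  rcases eq_or_ne m 0 with rfl | hm
  · simp [f, ha0]
  · rw [f, Nat.digits_def' (by omega : 1 < δ) (Nat.pos_of_ne_zero hm)]
    simp [Nat.ofDigits_cons, f]

lemma f_strictMono (hb2 : 2 ≤ b) (h2 : 2 ≤ δ) (ha0 : a 0 = 0)
    (hab : ∀ t < δ, a t < b)
    (hmono : ∀ t t', t < t' → t' < δ → a t < a t') :
    StrictMono (f b δ a) := by
  apply strictMono_nat_of_lt_succ
  intro m
  induction m using Nat.strong_induction_on with
  | _ m ih =>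
    have hδ0 : 0 < δ := by omega
    have hdm := Nat.div_add_mod m δ
    have hmod : m % δ < δ := Nat.mod_lt m hδ0
    rw [f_eq h2 ha0 m, f_eq h2 ha0 (m + 1)]
    rcases lt_or_eq_of_le (Nat.succ_le_of_lt hmod) with hlt | heq
    · have hm1 : m + 1 = δ * (m / δ) + (m % δ + 1) := by omega
      have e1 : (m + 1) % δ = m % δ + 1 := by
        rw [hm1, Nat.mul_add_mod, Nat.mod_eq_of_lt hlt]
      have e2 : (m + 1) / δ = m / δ := by
        rw [hm1, Nat.mul_add_div hδ0, Nat.div_eq_of_lt hlt, add_zero]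
      rw [e1, e2]
      exact Nat.add_lt_add_right (hmono _ _ (Nat.lt_succ_self _) hlt) _
    · have hm0 : m ≠ 0 := by
        intro h; subst h; simp at heq; omega
      have hm1 : m + 1 = δ * (m / δ + 1) := by rw [Nat.mul_succ]; omega
      have e1 : (m + 1) % δ = 0 := by rw [hm1, Nat.mul_mod_right]
      have e2 : (m + 1) / δ = m / δ + 1 := by
        rw [hm1, Nat.mul_div_cancel_left _ hδ0]
      rw [e1, e2, ha0, zero_add]
      have hq : m / δ < m := Nat.div_lt_self (Nat.pos_of_ne_zero hm0) (by omega)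
      have h1 : f b δ a (m / δ) + 1 ≤ f b δ a (m / δ + 1) := ih _ hq
      have h3 : b * (f b δ a (m / δ) + 1) ≤ b * f b δ a (m / δ + 1) :=
        Nat.mul_le_mul_left b h1
      have h4 : a (m % δ) < b := hab _ hmod
      nlinarith

lemma f_digits_mem (hb2 : 2 ≤ b) (h2 : 2 ≤ δ) (ha0 : a 0 = 0)
    (hab : ∀ t < δ, a t < b) {D : Finset ℕ} (haD : ∀ t < δ, a t ∈ D) :
    ∀ m, ∀ d ∈ Nat.digits b (f b δ a m), d ∈ D := by
  intro m
  induction m using Nat.strong_induction_on with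
  | _ m ih =>
    intro d hd
    rcases eq_or_ne m 0 with rfl | hm
    · rw [f_zero] at hd; simp at hd
    · rw [f_eq h2 ha0 m] at hd
      have hmod : m % δ < δ := Nat.mod_lt m (by omega)
      have har : a (m % δ) < b := hab _ hmod
      rcases eq_or_ne (a (m % δ) + b * f b δ a (m / δ)) 0 with h0 | h0
      · rw [h0] at hd; simp at hd
      · rw [Nat.digits_def' (by omega : 1 < b) (Nat.pos_of_ne_zero h0)] at hd
        have e1 : (a (m % δ) + b * f b δ a (m / δ)) % b = a (m % δ) := by
          rw [Nat.add_mul_mod_self_left, Nat.mod_eq_of_lt har]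
        have e2 : (a (m % δ) + b * f b δ a (m / δ)) / b = f b δ a (m / δ) := by
          rw [Nat.add_mul_div_left _ _ (by omega : 0 < b), Nat.div_eq_of_lt har, zero_add]
        rw [e1, e2] at hd
        rcases List.mem_cons.mp hd with rfl | hd'
        · exact haD _ hmod
        · exact ih (m / δ) (Nat.div_lt_self (Nat.pos_of_ne_zero hm) (by omega)) d hd'

lemma f_surj (hb2 : 2 ≤ b) (h2 : 2 ≤ δ) (ha0 : a 0 = 0)
    {D : Finset ℕ} (hsurj : ∀ d ∈ D, ∃ t, t < δ ∧ a t = d) :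
    ∀ c, (∀ d ∈ Nat.digits b c, d ∈ D) → ∃ m, f b δ a m = c := by
  intro c
  induction c using Nat.strong_induction_on with
  | _ c ih =>
    intro hc
    rcases eq_or_ne c 0 with rfl | hc0
    · exact ⟨0, f_zero⟩
    · have hdig := Nat.digits_def' (by omega : 1 < b) (Nat.pos_of_ne_zero hc0)
      have hcd : c % b ∈ D := hc _ (by rw [hdig]; exact List.mem_cons_self)
      obtain ⟨t, ht, hat⟩ := hsurj _ hcd
      obtain ⟨m, hm⟩ := ih (c / b) (Nat.div_lt_self (Nat.pos_of_ne_zero hc0) (by omega))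
        (fun d hd => hc d (by rw [hdig]; exact List.mem_cons_of_mem _ hd))
      refine ⟨δ * m + t, ?_⟩
      rw [f_eq h2 ha0, Nat.mul_add_mod, Nat.mod_eq_of_lt ht,
        Nat.mul_add_div (by omega : 0 < δ), Nat.div_eq_of_lt ht, add_zero, hat, hm]
      exact Nat.mod_add_div c b

lemma f_split (h2 : 2 ≤ δ) (ha0 : a 0 = 0) :
    ∀ i n j, j < δ ^ i →
      f b δ a (δ ^ i * n + j) = b ^ i * f b δ a n + f b δ a j := by
  intro i
  induction i with
  | zero =>
    intro n j hj
    have : j = 0 := by simpa using hj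
    subst this; simp [f_zero]
  | succ i ih =>
    intro n j hj
    have hδ0 : 0 < δ := by omega
    have hrw : δ ^ (i + 1) * n + j = δ * (δ ^ i * n) + j := by ring
    have e1 : (δ ^ (i + 1) * n + j) % δ = j % δ := by rw [hrw, Nat.mul_add_mod]
    have e2 : (δ ^ (i + 1) * n + j) / δ = δ ^ i * n + j / δ := by
      rw [hrw, Nat.mul_add_div hδ0]
    have hjd : j / δ < δ ^ i := Nat.div_lt_of_lt_mul (by rw [← pow_succ']; exact hj)
    rw [f_eq h2 ha0 (δ ^ (i + 1) * n + j), e1, e2, ih n (j / δ) hjd,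
      f_eq h2 ha0 j]
    ring

lemma f_lt_pow (hb2 : 2 ≤ b) (h2 : 2 ≤ δ) (ha0 : a 0 = 0)
    (hab : ∀ t < δ, a t < b) :
    ∀ i j, j < δ ^ i → f b δ a j < b ^ i := by
  intro i
  induction i with
  | zero =>
    intro j hj
    have : j = 0 := by simpa using hj
    subst this; simp [f_zero]
  | succ i ih =>
    intro j hj
    have hjd : j / δ < δ ^ i := Nat.div_lt_of_lt_mul (by rw [← pow_succ']; exact hj)
    have h1 : f b δ a (j / δ) < b ^ i := ih _ hjd
    have h2' : a (j % δ) < b := hab _ (Nat.mod_lt j (by omega))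
    rw [f_eq h2 ha0 j]
    calc a (j % δ) + b * f b δ a (j / δ) < b + b * f b δ a (j / δ) := by omega
      _ = b * (f b δ a (j / δ) + 1) := by ring
      _ ≤ b * b ^ i := Nat.mul_le_mul_left b (by omega)
      _ = b ^ (i + 1) := by ring

lemma sum_digits_pow_mul_add (hb2 : 2 ≤ b) :
    ∀ i x y, y < b ^ i →
      (Nat.digits b (b ^ i * x + y)).sum
        = (Nat.digits b x).sum + (Nat.digits b y).sum := by
  intro i
  induction i with
  | zero =>
    intro x y hy
    have : y = 0 := by simpa using hy
    subst this; simp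
  | succ i ih =>
    intro x y hy
    rcases eq_or_ne (b ^ (i + 1) * x + y) 0 with h0 | h0
    · have hb0 : 0 < b ^ (i + 1) := Nat.pow_pos (by omega)
      have hx : x = 0 := by nlinarith
      have hy0 : y = 0 := by omega
      simp [hx, hy0]
    · have hrw : b ^ (i + 1) * x + y = b * (b ^ i * x) + y := by ring
      have e1 : (b ^ (i + 1) * x + y) % b = y % b := by rw [hrw, Nat.mul_add_mod]
      have e2 : (b ^ (i + 1) * x + y) / b = b ^ i * x + y / b := by
        rw [hrw, Nat.mul_add_div (by omega : 0 < b)]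
      have hyb : y / b < b ^ i := Nat.div_lt_of_lt_mul (by rw [← pow_succ']; exact hy)
      rw [Nat.digits_def' (by omega : 1 < b) (Nat.pos_of_ne_zero h0), List.sum_cons,
        e1, e2, ih x (y / b) hyb]
      have hsy : (Nat.digits b y).sum = y % b + (Nat.digits b (y / b)).sum := by
        rcases eq_or_ne y 0 with rfl | hy0
        · simp
        · rw [Nat.digits_def' (by omega : 1 < b) (Nat.pos_of_ne_zero hy0), List.sum_cons]
      omega

end CantorAux

/-- For the increasing enumeration `k` of the integer Cantor set `C_{b,D}`
(with `0 ∈ D`, `δ = |D|`) and `s_b` the base-`b` digit sum, one has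
`s_b (k (δ^i * n + j)) = s_b (k n) + s_b (k j)` for all `i, n ≥ 0` and `0 ≤ j < δ^i`. -/
theorem cantor_digitSum_selfsimilar
    (b : ℕ) (hb : 3 ≤ b) (D : Finset ℕ) (hD : 2 ≤ D.card) (hDb : D.card < b)
    (hDsub : ∀ d ∈ D, d < b) (h0 : 0 ∈ D)
    (k : ℕ → ℕ) (hk : StrictMono k)
    (hkr : Set.range k = {m : ℕ | ∀ d ∈ Nat.digits b m, d ∈ D})
    (i n j : ℕ) (hj : j < D.card ^ i) :
    (Nat.digits b (k (D.card ^ i * n + j))).sum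
      = (Nat.digits b (k n)).sum + (Nat.digits b (k j)).sum := by
  classical
  set δ := D.card with hδ
  have h2 : 2 ≤ δ := hD
  have hb2 : 2 ≤ b := by omega
  set L := D.sort (· ≤ ·) with hL
  have hlen : L.length = δ := D.length_sort _
  set a : ℕ → ℕ := fun t => L.getD t 0 with ha
  have hgetD : ∀ t (h : t < L.length), a t = L[t] := by
    intro t h; simp [ha, List.getD_eq_getElem?_getD, List.getElem?_eq_getElem h]
  have haD : ∀ t < δ, a t ∈ D := by
    intro t ht
    have ht' : t < L.length := by omega
    rw [hgetD t ht']
    exact (Finset.mem_sort _).mp (List.getElem_mem _)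
  have hab : ∀ t < δ, a t < b := fun t ht => hDsub _ (haD t ht)
  have hmono : ∀ t t', t < t' → t' < δ → a t < a t' := by
    intro t t' htt ht'
    have h1 : t < L.length := by omega
    have h2' : t' < L.length := by omega
    rw [hgetD t h1, hgetD t' h2']
    exact List.pairwise_iff_getElem.mp (D.sortedLT_sort).pairwise t t' h1 h2' htt
  have ha0 : a 0 = 0 := by
    have hl : 0 < L.length := by omega
    rw [hgetD 0 hl]
    have := Finset.sorted_zero_eq_min' (s := D) (h := hl)
    rw [this]
    exact le_antisymm (D.min'_le 0 h0) (Nat.zero_le _)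
  have hsurj : ∀ d ∈ D, ∃ t, t < δ ∧ a t = d := by
    intro d hd
    have : d ∈ L := (Finset.mem_sort _).mpr hd
    obtain ⟨t, ht, hdt⟩ := List.mem_iff_getElem.mp this
    exact ⟨t, by omega, by rw [hgetD t ht]; exact hdt⟩
  have hfmono : StrictMono (CantorAux.f b δ a) :=
    CantorAux.f_strictMono hb2 h2 ha0 hab hmono
  have hfrange : Set.range (CantorAux.f b δ a)
      = {m : ℕ | ∀ d ∈ Nat.digits b m, d ∈ D} := by
    ext c
    constructor
    · rintro ⟨m, rfl⟩
      exact CantorAux.f_digits_mem hb2 h2 ha0 hab haD m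
    · intro hc
      exact CantorAux.f_surj hb2 h2 ha0 hsurj c hc
  have hkf : k = CantorAux.f b δ a :=
    (hk.range_inj hfmono).mp (hkr.trans hfrange.symm)
  rw [hkf, CantorAux.f_split h2 ha0 i n j hj,
    CantorAux.sum_digits_pow_mul_add hb2 i _ _
      (CantorAux.f_lt_pow hb2 h2 ha0 hab i j hj)]
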